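/- For every rack X, every abelian group A, every n ≥ 1 and every function f : X^n → A, the coboundary of the coboundary of f vanishes: δ(δf) = 0. Consequently the groups C^n(X;A) of n-cochains together with δ form a cochain complex. -/

import Mathlib

/-- Face map: `ε = false` deletes coordinate `i+1`; `ε = true` acts by `op`. -/
def qface {X : Type*} (op : X → X → X) (ε : Bool) {m : ℕ} (i : Fin m)
    (x : Fin (m + 1) → X) : Fin m → X :=
  fun k => if (k : ℕ) < (i : ℕ) + 1
    then (if ε then op (x k.castSucc) (x i.succ) else x k.castSucc)
    else x k.succ

def qdelta {X A : Type*} [AddCommGroup A] (op : X → X → X) {n : ℕ}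
    (f : (Fin n → X) → A) : (Fin (n + 1) → X) → A :=
  fun x =>
    (∑ i : Fin n, ((-1 : ℤ) ^ (i : ℕ)) • f (x ∘ (Fin.succ i).succAbove))
      + ∑ j : Fin n, ((-1 : ℤ) ^ ((j : ℕ) + 1)) •
          f (fun k => if (k : ℕ) < (j : ℕ) + 1 then op (x k.castSucc) (x j.succ)
              else x k.succ)

lemma qdelta_eq {X A : Type*} [AddCommGroup A] (op : X → X → X) {n : ℕ}
    (f : (Fin n → X) → A) (x : Fin (n + 1) → X) :
    qdelta op f x = ∑ i : Fin n,
      ((-1 : ℤ) ^ (i : ℕ)) • (f (qface op false i x) - f (qface op true i x)) := by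
  unfold qdelta
  rw [← Finset.sum_add_distrib]
  refine Finset.sum_congr rfl fun i _ => ?_
  have h1 : x ∘ (Fin.succ i).succAbove = qface op false i x := by
    funext k
    simp only [Function.comp, qface, Bool.false_eq_true, if_false, Fin.succAbove]
    by_cases h : (k : ℕ) < (i : ℕ) + 1
    · rw [if_pos h, if_pos (by simpa [Fin.lt_def] using h)]
    · rw [if_neg h, if_neg (show ¬ (k.castSucc < i.succ) from h)]
  have h2 : (fun k : Fin n => if (k : ℕ) < (i : ℕ) + 1 then op (x k.castSucc) (x i.succ)
      else x k.succ) = qface op true i x := by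
    funext k; simp [qface]
  rw [h1, h2, smul_sub, pow_succ, mul_neg_one, neg_smul, sub_eq_add_neg]

lemma qface_comm {X : Type*} (op : X → X → X)
    (hIII : ∀ a b c : X, op (op a b) c = op (op a c) (op b c))
    {n : ℕ} (ε η : Bool) (a b : Fin n) (hab : (b : ℕ) ≤ (a : ℕ))
    (x : Fin (n + 2) → X) :
    qface op ε b (qface op η a.succ x) = qface op η a (qface op ε b.castSucc x) := by
  funext k
  cases ε <;> cases η <;>
    simp only [qface, Fin.coe_castSucc, Fin.val_succ, Fin.succ_castSucc,
      if_true, if_false, Bool.false_eq_true] <;>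
    split_ifs <;> first
      | rfl
      | omega
      | (exact (hIII _ _ _).symm)

/-- The summand of `δ(δ f)` indexed by an outer face `i` and inner face `j`. -/
def qterm {X A : Type*} [AddCommGroup A] (op : X → X → X) {n : ℕ}
    (f : (Fin n → X) → A) (x : Fin (n + 2) → X) (i : Fin (n + 1)) (j : Fin n) : A :=
  ((-1 : ℤ) ^ ((i : ℕ) + (j : ℕ))) •
    ((f (qface op false j (qface op false i x))
        - f (qface op true j (qface op false i x)))
      - (f (qface op false j (qface op true i x))
        - f (qface op true j (qface op true i x))))

lemma qterm_cancel {X A : Type*} [AddCommGroup A] (op : X → X → X)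
    (hIII : ∀ a b c : X, op (op a b) c = op (op a c) (op b c))
    {n : ℕ} (f : (Fin n → X) → A) (x : Fin (n + 2) → X) (a b : Fin n)
    (hab : (b : ℕ) ≤ (a : ℕ)) :
    qterm op f x a.succ b + qterm op f x b.castSucc a = 0 := by
  unfold qterm
  rw [qface_comm op hIII false false a b hab x,
    qface_comm op hIII false true a b hab x,
    qface_comm op hIII true false a b hab x,
    qface_comm op hIII true true a b hab x]
  have hpow : ((-1 : ℤ) ^ ((a.succ : ℕ) + (b : ℕ)))
      = -((-1 : ℤ) ^ ((b.castSucc : ℕ) + (a : ℕ))) := by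
    have : (a.succ : ℕ) + (b : ℕ) = ((b.castSucc : ℕ) + (a : ℕ)) + 1 := by
      simp [Fin.val_succ, Fin.coe_castSucc]; omega
    rw [this, pow_succ, mul_neg_one]
  rw [hpow, neg_smul, neg_add_eq_zero]
  congr 1
  abel

lemma qterm_cancel₁ {X A : Type*} [AddCommGroup A] (op : X → X → X)
    (hIII : ∀ a b c : X, op (op a b) c = op (op a c) (op b c))
    {n : ℕ} (f : (Fin n → X) → A) (x : Fin (n + 2) → X) (iv : ℕ)
    (h1 : iv < n + 1) (h3 : iv - 1 < n) (j : Fin n) (h : (j : ℕ) < iv) :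
    qterm op f x ⟨iv, h1⟩ j + qterm op f x j.castSucc ⟨iv - 1, h3⟩ = 0 := by
  have e : (⟨iv, h1⟩ : Fin (n + 1)) = (⟨iv - 1, h3⟩ : Fin n).succ := by
    ext; simp [Fin.val_succ]; omega
  rw [e]
  exact qterm_cancel op hIII f x ⟨iv - 1, h3⟩ j (by simp; omega)

lemma qterm_cancel₂ {X A : Type*} [AddCommGroup A] (op : X → X → X)
    (hIII : ∀ a b c : X, op (op a b) c = op (op a c) (op b c))
    {n : ℕ} (f : (Fin n → X) → A) (x : Fin (n + 2) → X) (iv : ℕ)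
    (h1 : iv < n + 1) (h3 : iv < n) (j : Fin n) (h : iv ≤ (j : ℕ)) :
    qterm op f x ⟨iv, h1⟩ j + qterm op f x j.succ ⟨iv, h3⟩ = 0 := by
  have e : (⟨iv, h1⟩ : Fin (n + 1)) = (⟨iv, h3⟩ : Fin n).castSucc := by
    ext; simp
  rw [e, add_comm]
  exact qterm_cancel op hIII f x j ⟨iv, h3⟩ h

theorem rack_coboundary_comp_coboundary_eq_zero {X A : Type*} [AddCommGroup A]
    (op : X → X → X)
    (hII : ∀ a b : X, ∃! c : X, op c b = a)
    (hIII : ∀ a b c : X, op (op a b) c = op (op a c) (op b c))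
    (n : ℕ) (hn : 1 ≤ n) (f : (Fin n → X) → A) :
    qdelta op (qdelta op f) = 0 := by
  funext x
  simp only [Pi.zero_apply]
  have hsum : qdelta op (qdelta op f) x =
      ∑ p ∈ (Finset.univ : Finset (Fin (n + 1))) ×ˢ (Finset.univ : Finset (Fin n)),
        qterm op f x p.1 p.2 := by
    rw [qdelta_eq, Finset.sum_product]
    refine Finset.sum_congr rfl fun i _ => ?_
    rw [qdelta_eq op f, qdelta_eq op f, ← Finset.sum_sub_distrib, Finset.smul_sum]
    refine Finset.sum_congr rfl fun j _ => ?_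
    rw [← smul_sub, smul_smul, ← pow_add]
    rfl
  rw [hsum]
  refine Finset.sum_ninvolution
    (fun p => if h : (p.2 : ℕ) < (p.1 : ℕ)
      then (p.2.castSucc, ⟨(p.1 : ℕ) - 1, by have := p.1.isLt; have := p.2.isLt; omega⟩)
      else (p.2.succ, ⟨(p.1 : ℕ), by have := p.2.isLt; omega⟩))
    (fun p => ?_) (fun p _ => ?_)
    (fun p => Finset.mem_product.2 ⟨Finset.mem_univ _, Finset.mem_univ _⟩)
    (fun p => ?_)
  · -- cancellation
    obtain ⟨i, j⟩ := p
    dsimp only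
    by_cases h : (j : ℕ) < (i : ℕ)
    · rw [dif_pos h]
      obtain ⟨iv, hiv⟩ := i
      exact qterm_cancel₁ op hIII f x iv hiv _ j h
    · rw [dif_neg h]
      obtain ⟨iv, hiv⟩ := i
      exact qterm_cancel₂ op hIII f x iv hiv _ j (Nat.le_of_not_lt h)
  · -- no fixed point
    obtain ⟨i, j⟩ := p
    dsimp only
    by_cases h : (j : ℕ) < (i : ℕ)
    · rw [dif_pos h]
      intro hc
      have := congrArg (fun q => ((q.1 : Fin (n + 1)) : ℕ)) hc
      simp only [Fin.coe_castSucc] at this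
      omega
    · rw [dif_neg h]
      intro hc
      have := congrArg (fun q => ((q.1 : Fin (n + 1)) : ℕ)) hc
      simp only [Fin.val_succ] at this
      omega
  · -- involution
    obtain ⟨i, j⟩ := p
    dsimp only
    by_cases h : (j : ℕ) < (i : ℕ)
    · rw [dif_pos h]
      rw [dif_neg (by simp; omega)]
      refine Prod.ext ?_ ?_ <;> dsimp <;> ext <;> simp <;> omega
    · rw [dif_neg h]
      rw [dif_pos (by simp; omega)]
      refine Prod.ext ?_ ?_ <;> dsimp <;> ext <;> simp <;> omega
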